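/- Let k ≥ 2 and let p : {0,1}^k → [0,∞) satisfy Σ_{z ∈ {0,1}^k} p(z) = 1. For y ∈ {0,1}^{k−1} set p(y) := p(y.0) + p(y.1) (where y.b denotes y with bit b appended), let q(y) ∈ [0,1] satisfy p(y) q(y) = p(y.0) and p(y)(1 − q(y)) = p(y.1), and let θ_y ∈ [0, π] satisfy cos(θ_y/2) = √(q(y)). For each y define the unitary C_y := |y⟩⟨y| ⊗ R_Y(θ_y) + (I_{2^{k−1}} − |y⟩⟨y|) ⊗ I_2 on ℂ^{2^{k−1}} ⊗ ℂ², where R_Y(θ) := [[cos(θ/2), −sin(θ/2)], [sin(θ/2), cos(θ/2)]]. Then the matrices {C_y} pairwise commute, and (∏_{y ∈ {0,1}^{k−1}} C_y)(Σ_{y ∈ {0,1}^{k−1}} √(p(y)) |y⟩ ⊗ |0⟩) = Σ_{y ∈ {0,1}^{k−1}} (√(p(y.0)) |y⟩ ⊗ |0⟩ + √(p(y.1)) |y⟩ ⊗ |1⟩) = Σ_{z ∈ {0,1}^k} √(p(z)) |z⟩. -/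

import Mathlib

open Kronecker

/-- The rotation matrix `R_Y(θ) = [[cos(θ/2), −sin(θ/2)], [sin(θ/2), cos(θ/2)]]`. -/
noncomputable def RY (θ : ℝ) : Matrix (Fin 2) (Fin 2) ℂ :=
  !![(Real.cos (θ / 2) : ℂ), -(Real.sin (θ / 2) : ℂ);
     (Real.sin (θ / 2) : ℂ), (Real.cos (θ / 2) : ℂ)]

/-- The controlled gate `C_y = |y⟩⟨y| ⊗ R_Y(θ_y) + (I − |y⟩⟨y|) ⊗ I₂` on
`ℂ^{2^{k−1}} ⊗ ℂ²`, the basis of `ℂ^{2^{k−1}}` being indexed by the bit strings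
`y : Fin (k−1) → Fin 2`. -/
noncomputable def ctrlRY {K : ℕ} (θ : (Fin K → Fin 2) → ℝ) (y : Fin K → Fin 2) :
    Matrix ((Fin K → Fin 2) × Fin 2) ((Fin K → Fin 2) × Fin 2) ℂ :=
  (Matrix.single y y (1 : ℂ)) ⊗ₖ RY (θ y) +
    ((1 : Matrix (Fin K → Fin 2) (Fin K → Fin 2) ℂ) - Matrix.single y y 1) ⊗ₖ
      (1 : Matrix (Fin 2) (Fin 2) ℂ)

lemma ctrlRY_commute {K : ℕ} (θ : (Fin K → Fin 2) → ℝ) (y y' : Fin K → Fin 2) :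
    Commute (ctrlRY θ y) (ctrlRY θ y') := by
  rcases eq_or_ne y y' with rfl | h
  · exact Commute.refl _
  have h1 : Matrix.single y y (1:ℂ) * Matrix.single y' y' 1 = 0 :=
    Matrix.single_mul_single_of_ne (1:ℂ) y y y' h 1
  have h2 : Matrix.single y' y' (1:ℂ) * Matrix.single y y 1 = 0 :=
    Matrix.single_mul_single_of_ne (1:ℂ) y' y' y h.symm 1
  unfold Commute SemiconjBy ctrlRY
  simp only [add_mul, mul_add, ← Matrix.mul_kronecker_mul, sub_mul, mul_sub, one_mul, mul_one,
    h1, h2, Matrix.zero_kronecker, sub_zero, zero_add, add_zero, zero_sub, sub_neg_eq_add]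
  abel

lemma ctrlRY_mulVec {K : ℕ} (θ : (Fin K → Fin 2) → ℝ) (y : Fin K → Fin 2)
    (u : ((Fin K → Fin 2) × Fin 2) → ℂ) :
    (ctrlRY θ y).mulVec u = fun z =>
      if z.1 = y then RY (θ y) z.2 0 * u (y, 0) + RY (θ y) z.2 1 * u (y, 1) else u z := by
  funext z
  obtain ⟨x, b⟩ := z
  simp only [ctrlRY, Matrix.add_mulVec, Pi.add_apply]
  have hk : ∀ (A : Matrix (Fin K → Fin 2) (Fin K → Fin 2) ℂ) (B : Matrix (Fin 2) (Fin 2) ℂ),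
      ((A ⊗ₖ B).mulVec u) (x, b) = ∑ x', ∑ b', A x x' * B b b' * u (x', b') := by
    intro A B
    rw [Matrix.mulVec, dotProduct, Fintype.sum_prod_type]
    simp [Matrix.kroneckerMap_apply]
  rw [hk, hk]
  simp only [Matrix.one_apply, Matrix.single, Matrix.of_apply]
  by_cases hx : x = y
  · subst hx
    simp [Matrix.one_apply, ite_and, mul_ite, ite_mul, Finset.sum_ite_eq, Finset.sum_ite_eq',
      Fin.sum_univ_two]
  · simp [Matrix.one_apply, hx, Ne.symm hx, ite_and, mul_ite, ite_mul, Finset.sum_ite_eq, Finset.sum_ite_eq',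
      Fin.sum_univ_two]

/-- inductive step of the quantum generator.  Identifying `{0,1}^k` with
`{0,1}^{k−1} × {0,1}` (`z = y.b`) and `ℂ^{2^k}` with `ℂ^{2^{k−1}} ⊗ ℂ²`: given a
probability distribution `p` on `{0,1}^k`, marginals `p(y) = p(y.0) + p(y.1)`,
conditional probabilities `q(y) ∈ [0,1]` with `p(y)q(y) = p(y.0)` and
`p(y)(1 − q(y)) = p(y.1)`, and angles `θ_y ∈ [0,π]` with `cos(θ_y/2) = √(q(y))`, the
gates `C_y` pairwise commute and their product (in any order: `l` enumerates
`{0,1}^{k−1}` in an arbitrary order) maps `Σ_y √(p(y))|y⟩⊗|0⟩` to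
`Σ_y (√(p(y.0))|y⟩⊗|0⟩ + √(p(y.1))|y⟩⊗|1⟩) = Σ_z √(p(z))|z⟩`. -/
theorem generator_inductive_step (k : ℕ) (hk : 2 ≤ k)
    (p : ((Fin (k - 1) → Fin 2) × Fin 2) → ℝ)
    (hp : ∀ z, 0 ≤ p z) (hpsum : ∑ z : (Fin (k - 1) → Fin 2) × Fin 2, p z = 1)
    (q θ : (Fin (k - 1) → Fin 2) → ℝ)
    (hq : ∀ y, q y ∈ Set.Icc (0 : ℝ) 1)
    (hq0 : ∀ y, (p (y, 0) + p (y, 1)) * q y = p (y, 0))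
    (hq1 : ∀ y, (p (y, 0) + p (y, 1)) * (1 - q y) = p (y, 1))
    (hθ : ∀ y, θ y ∈ Set.Icc (0 : ℝ) Real.pi)
    (hcos : ∀ y, Real.cos (θ y / 2) = Real.sqrt (q y)) :
    (∀ y y', Commute (ctrlRY θ y) (ctrlRY θ y')) ∧
      ∀ l : List (Fin (k - 1) → Fin 2), l.Nodup → (∀ y, y ∈ l) →
        ((l.map (ctrlRY θ)).prod).mulVec
            (fun z => if z.2 = 0 then ((Real.sqrt (p (z.1, 0) + p (z.1, 1)) : ℝ) : ℂ) else 0)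
          = fun z => ((Real.sqrt (p z) : ℝ) : ℂ) := by
  refine ⟨fun y y' => ctrlRY_commute θ y y', ?_⟩
  set v : ((Fin (k - 1) → Fin 2) × Fin 2) → ℂ :=
    fun z => if z.2 = 0 then ((Real.sqrt (p (z.1, 0) + p (z.1, 1)) : ℝ) : ℂ) else 0 with hv
  set w : ((Fin (k - 1) → Fin 2) × Fin 2) → ℂ :=
    fun z => ((Real.sqrt (p z) : ℝ) : ℂ) with hw
  -- key real computations
  have hsin : ∀ y, Real.sin (θ y / 2) = Real.sqrt (1 - q y) := by
    intro y
    have hnn : 0 ≤ Real.sin (θ y / 2) :=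
      Real.sin_nonneg_of_nonneg_of_le_pi (by linarith [(hθ y).1])
        (by linarith [(hθ y).2, Real.pi_pos.le])
    have hsq : Real.sin (θ y / 2) ^ 2 = 1 - q y := by
      rw [Real.sin_sq, hcos, Real.sq_sqrt (hq y).1]
    rw [← hsq, Real.sqrt_sq hnn]
  have key0 : ∀ y, Real.cos (θ y / 2) * Real.sqrt (p (y, 0) + p (y, 1)) = Real.sqrt (p (y, 0)) := by
    intro y
    rw [hcos, ← Real.sqrt_mul (hq y).1, mul_comm, hq0]
  have key1 : ∀ y, Real.sin (θ y / 2) * Real.sqrt (p (y, 0) + p (y, 1)) = Real.sqrt (p (y, 1)) := by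
    intro y
    rw [hsin, ← Real.sqrt_mul (by linarith [(hq y).2]), mul_comm, hq1]
  have main : ∀ l : List (Fin (k - 1) → Fin 2), l.Nodup →
      ((l.map (ctrlRY θ)).prod).mulVec v = fun z => if z.1 ∈ l then w z else v z := by
    intro l hl
    induction l with
    | nil => simp [Matrix.one_mulVec]
    | cons a l ih =>
      have hal : a ∉ l := (List.nodup_cons.mp hl).1
      have hln : l.Nodup := (List.nodup_cons.mp hl).2
      rw [List.map_cons, List.prod_cons, ← Matrix.mulVec_mulVec, ih hln, ctrlRY_mulVec]
      funext z
      obtain ⟨x, b⟩ := z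
      by_cases hx : x = a
      · subst hx
        simp only [if_pos rfl, if_neg hal, List.mem_cons, true_or, if_pos]
        have h0 : v (x, 0) = ((Real.sqrt (p (x, 0) + p (x, 1)) : ℝ) : ℂ) := by simp [hv]
        have h1 : v (x, 1) = 0 := by simp [hv]
        rw [h0, h1, mul_zero, add_zero]
        fin_cases b
        · show RY (θ x) 0 0 * _ = w (x, 0)
          rw [hw]
          simp only [RY, Matrix.cons_val', Matrix.cons_val_zero, Matrix.empty_val',
            Matrix.cons_val_fin_one, Matrix.of_apply]
          rw [← Complex.ofReal_mul, key0]
        · show RY (θ x) 1 0 * _ = w (x, 1)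
          rw [hw]
          simp only [RY, Matrix.cons_val', Matrix.cons_val_zero, Matrix.empty_val',
            Matrix.cons_val_fin_one, Matrix.of_apply, Matrix.cons_val_one, Matrix.head_cons, Matrix.vecHead]
          rw [← Complex.ofReal_mul, key1]
      · simp [if_neg hx, List.mem_cons, hx, false_or]
  intro l hl hcov
  rw [main l hl]
  funext z
  rw [if_pos (hcov z.1)]
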